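/- Let L : ℝ^d → ℝ be differentiable, bounded below, with ℓ-Lipschitz gradient (ℓ > 0). Let γ > 0, M_g > 0, ε > 0, and let (η_t)_{t≥0} be positive step sizes with Σ_{t=0}^∞ η_t = ∞ and Σ_{t=0}^∞ η_t² < ∞. Let (G_t)_{t≥0} be symmetric positive definite matrices with ε ≤ λ_min(G_t⁻¹) and λ_max(G_t⁻¹) ≤ γ⁻¹ for all t, define θ_{t+1} := θ_t − η_t G_t⁻¹ ∇L(θ_t), and assume ‖∇L(θ_t)‖ ≤ M_g for all t. Then lim inf_{t→∞} ‖∇L(θ_t)‖² = 0. -/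

import Mathlib

open Matrix Filter

lemma repr_toEuclideanLin {d : ℕ} (A : Matrix (Fin d) (Fin d) ℝ) (hA : A.IsHermitian)
    (x : EuclideanSpace ℝ (Fin d)) (i : Fin d) :
    hA.eigenvectorBasis.repr (Matrix.toEuclideanLin A x) i
      = hA.eigenvalues i * hA.eigenvectorBasis.repr x i := by
  have hsym := (Matrix.isHermitian_iff_isSymmetric).1 hA
  have hb : Matrix.toEuclideanLin A (hA.eigenvectorBasis i)
      = hA.eigenvalues i • hA.eigenvectorBasis i := by
    have := hA.mulVec_eigenvectorBasis i
    apply (EuclideanSpace.equiv (Fin d) ℝ).injective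
    simpa [Matrix.toEuclideanLin_apply, PiLp.coe_continuousLinearEquiv] using this
  rw [OrthonormalBasis.repr_apply_apply, OrthonormalBasis.repr_apply_apply,
    ← hsym (hA.eigenvectorBasis i) x, hb, inner_smul_left]
  simp

lemma quad_bounds {d : ℕ} (A : Matrix (Fin d) (Fin d) ℝ) (hA : A.IsHermitian)
    (x : EuclideanSpace ℝ (Fin d)) (a b : ℝ) (ha : 0 ≤ a) (hb : 0 ≤ b)
    (h1 : ∀ i, a ≤ hA.eigenvalues i) (h2 : ∀ i, hA.eigenvalues i ≤ b) :
    a * ‖x‖ ^ 2 ≤ inner ℝ x (Matrix.toEuclideanLin A x) ∧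
      ‖Matrix.toEuclideanLin A x‖ ≤ b * ‖x‖ := by
  set B := hA.eigenvectorBasis
  set u := Matrix.toEuclideanLin A x with hu
  have hrepr : ∀ i, B.repr u i = hA.eigenvalues i * B.repr x i :=
    repr_toEuclideanLin A hA x
  have hnx : ‖x‖ ^ 2 = ∑ i, (B.repr x i) ^ 2 := by
    rw [← B.repr.norm_map x, EuclideanSpace.norm_eq]
    rw [Real.sq_sqrt (by positivity)]
    simp [sq_abs]
  have hnu : ‖u‖ ^ 2 = ∑ i, (hA.eigenvalues i) ^ 2 * (B.repr x i) ^ 2 := by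
    rw [← B.repr.norm_map u, EuclideanSpace.norm_eq]
    rw [Real.sq_sqrt (by positivity)]
    refine Finset.sum_congr rfl fun i _ => ?_
    rw [Real.norm_eq_abs, sq_abs, hrepr i]; ring
  have hinner : (inner ℝ x u : ℝ) = ∑ i, hA.eigenvalues i * (B.repr x i) ^ 2 := by
    rw [← B.repr.inner_map_map x u]
    rw [EuclideanSpace.inner_eq_star_dotProduct]
    simp only [dotProduct, Pi.star_apply, star_trivial]
    refine Finset.sum_congr rfl fun i _ => ?_
    rw [hrepr i]; ring
  constructor
  · rw [hinner, hnx, Finset.mul_sum]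
    refine Finset.sum_le_sum fun i _ => ?_
    exact mul_le_mul_of_nonneg_right (h1 i) (sq_nonneg _)
  · have hsq : ‖u‖ ^ 2 ≤ (b * ‖x‖) ^ 2 := by
      rw [hnu, mul_pow, hnx, Finset.mul_sum]
      refine Finset.sum_le_sum fun i _ => ?_
      refine mul_le_mul_of_nonneg_right ?_ (sq_nonneg _)
      exact pow_le_pow_left₀ (ha.trans (h1 i)) (h2 i) 2
    have h := Real.sqrt_le_sqrt hsq
    rwa [Real.sqrt_sq (norm_nonneg u), Real.sqrt_sq (by positivity)] at h

lemma descent {d : ℕ} (L : EuclideanSpace ℝ (Fin d) → ℝ) (hL : Differentiable ℝ L)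
    {c : ℝ} (hc : 0 ≤ c)
    (hLip : ∀ θ₁ θ₂ : EuclideanSpace ℝ (Fin d),
      ‖gradient L θ₁ - gradient L θ₂‖ ≤ c * ‖θ₁ - θ₂‖)
    (x y : EuclideanSpace ℝ (Fin d)) :
    L y ≤ L x + inner ℝ (gradient L x) (y - x) + c * ‖y - x‖ ^ 2 := by
  set φ : EuclideanSpace ℝ (Fin d) →L[ℝ] ℝ :=
    (InnerProductSpace.toDual ℝ _) (gradient L x) with hφ
  have hfd : ∀ z, fderiv ℝ L z = (InnerProductSpace.toDual ℝ _) (gradient L z) := by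
    intro z
    rw [gradient]
    exact ((InnerProductSpace.toDual ℝ _).apply_symm_apply _).symm
  have key : ‖L y - L x - φ (y - x)‖ ≤ (c * ‖y - x‖) * ‖y - x‖ := by
    refine (convex_segment x y).norm_image_sub_le_of_norm_fderiv_le'
      (fun z _ => hL z) (fun z hz => ?_)
      (left_mem_segment ℝ x y) (right_mem_segment ℝ x y)
    rw [hfd z, hφ, ← map_sub]
    rw [(InnerProductSpace.toDual ℝ _).norm_map]
    refine (hLip z x).trans ?_
    refine mul_le_mul_of_nonneg_left ?_ hc
    obtain ⟨a, b, ha, hb, hab, rfl⟩ := hz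
    have : a • x + b • y - x = b • (y - x) := by
      have : a = 1 - b := by linarith
      rw [this]; module
    rw [this, norm_smul, Real.norm_eq_abs, abs_of_nonneg hb]
    nlinarith [norm_nonneg (y - x)]
  have h1 : L y - L x - φ (y - x) ≤ c * ‖y - x‖ ^ 2 := by
    have := (abs_le.mp (by rwa [Real.norm_eq_abs] at key)).2
    nlinarith
  have hφv : φ (y - x) = inner ℝ (gradient L x) (y - x) := by
    rw [hφ]; simp [InnerProductSpace.toDual_apply_apply]
  linarith [hφv ▸ h1]


lemma liminf_eq_zero_of_summable_mul (η a : ℕ → ℝ) (Mb : ℝ)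
    (hη : ∀ t, 0 < η t) (ha : ∀ t, 0 ≤ a t) (haM : ∀ t, a t ≤ Mb)
    (hdiv : Filter.Tendsto (fun T => ∑ t ∈ Finset.range T, η t) Filter.atTop Filter.atTop)
    (hS : Summable fun t => η t * a t) :
    Filter.liminf a Filter.atTop = 0 := by
  have hfreq : ∀ δ : ℝ, 0 < δ → ∃ᶠ t in atTop, a t ≤ δ := by
    intro δ hδ
    by_contra hcon
    rw [not_frequently] at hcon
    have hev : ∀ᶠ t in atTop, δ ≤ a t := hcon.mono fun t ht => le_of_not_ge ht
    obtain ⟨N, hN⟩ := eventually_atTop.mp hev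
    have hS' : Summable fun t => η (t + N) * a (t + N) := (summable_nat_add_iff N).mpr hS
    have hη' : Summable fun t => η (t + N) := by
      refine Summable.of_nonneg_of_le (fun t => (hη _).le) (fun t => ?_)
        (hS'.mul_left δ⁻¹)
      have h1 : δ ≤ a (t + N) := hN _ (Nat.le_add_left N t)
      have h2 : δ * η (t + N) ≤ η (t + N) * a (t + N) := by
        rw [mul_comm]
        exact mul_le_mul_of_nonneg_left h1 (hη _).le
      have h3 := mul_le_mul_of_nonneg_left h2 (inv_nonneg.mpr hδ.le)
      rw [← mul_assoc, inv_mul_cancel₀ hδ.ne', one_mul] at h3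
      exact h3
    have hηsum : Summable η := (summable_nat_add_iff N).mp hη'
    exact absurd hdiv (not_tendsto_atTop_of_tendsto_nhds hηsum.hasSum.tendsto_sum_nat)
  have hbdd_ge : IsBoundedUnder (· ≥ ·) atTop a :=
    ⟨0, Filter.eventually_map.mpr (Filter.Eventually.of_forall ha)⟩
  have hup : liminf a atTop ≤ 0 := by
    refine le_of_forall_pos_le_add fun δ hδ => ?_
    rw [zero_add]
    exact liminf_le_of_frequently_le (hfreq δ hδ) hbdd_ge
  have hlo : 0 ≤ liminf a atTop := by
    refine le_liminf_of_le ?_ (Filter.Eventually.of_forall ha)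
    refine IsBoundedUnder.isCoboundedUnder_ge ?_
    exact ⟨Mb, Filter.eventually_map.mpr (Filter.Eventually.of_forall haM)⟩
  exact le_antisymm hup hlo

/-- Theorem 1 (deterministic form): convergence of Ginger-style preconditioned
gradient descent on possibly non-convex objectives under Robbins–Monro step
sizes and uniformly bounded preconditioner spectra:
`lim inf_{t→∞} ‖∇L(θ_t)‖² = 0`. -/
theorem ginger_convergence (d : ℕ)
    (L : EuclideanSpace ℝ (Fin d) → ℝ) (hL : Differentiable ℝ L)
    (hbdd : BddBelow (Set.range L))
    (ℓ : ℝ) (hℓ : 0 < ℓ)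
    (hLip : ∀ θ₁ θ₂ : EuclideanSpace ℝ (Fin d),
      ‖gradient L θ₁ - gradient L θ₂‖ ≤ ℓ * ‖θ₁ - θ₂‖)
    (γ Mg ε : ℝ) (hγ : 0 < γ) (hMg : 0 < Mg) (hε : 0 < ε)
    (η : ℕ → ℝ) (hη : ∀ t, 0 < η t)
    (hdiv : Tendsto (fun T => ∑ t ∈ Finset.range T, η t) atTop atTop)
    (hsq : Summable fun t => η t ^ 2)
    (G : ℕ → Matrix (Fin d) (Fin d) ℝ) (hG : ∀ t, (G t).PosDef)
    (hmin : ∀ t, ε ≤ ⨅ i, (hG t).inv.1.eigenvalues i)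
    (hmax : ∀ t, (⨆ i, (hG t).inv.1.eigenvalues i) ≤ γ⁻¹)
    (θ : ℕ → EuclideanSpace ℝ (Fin d))
    (hstep : ∀ t, θ (t + 1) = θ t - η t • Matrix.toEuclideanLin (G t)⁻¹ (gradient L (θ t)))
    (hgrad : ∀ t, ‖gradient L (θ t)‖ ≤ Mg) :
    liminf (fun t => ‖gradient L (θ t)‖ ^ 2) atTop = 0 := by
  -- d must be positive
  have hd : 0 < d := by
    rcases Nat.eq_zero_or_pos d with h | h
    · exfalso
      subst h
      have := hmin 0
      rw [Real.iInf_of_isEmpty] at this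
      linarith
    · exact h
  haveI : Nonempty (Fin d) := ⟨⟨0, hd⟩⟩
  set g : ℕ → EuclideanSpace ℝ (Fin d) := fun t => gradient L (θ t) with hg
  set u : ℕ → EuclideanSpace ℝ (Fin d) :=
    fun t => Matrix.toEuclideanLin (G t)⁻¹ (g t) with hudef
  set a : ℕ → ℝ := fun t => ‖g t‖ ^ 2 with ha
  have hεγ : ε ≤ γ⁻¹ := by
    have i : Fin d := ⟨0, hd⟩
    exact le_trans (le_trans (hmin 0)
      (ciInf_le (Set.Finite.bddBelow (Set.finite_range _)) i))
      (le_trans (le_ciSup (Set.Finite.bddAbove (Set.finite_range _)) i) (hmax 0))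
  have hquad : ∀ t, ε * ‖g t‖ ^ 2 ≤ inner ℝ (g t) (u t) ∧ ‖u t‖ ≤ γ⁻¹ * ‖g t‖ := by
    intro t
    refine quad_bounds _ (hG t).inv.1 (g t) ε γ⁻¹ hε.le (inv_nonneg.mpr hγ.le) ?_ ?_
    · exact fun i => (hmin t).trans (ciInf_le (Set.Finite.bddBelow (Set.finite_range _)) i)
    · exact fun i => (le_ciSup (Set.Finite.bddAbove (Set.finite_range _)) i).trans (hmax t)
  set C : ℝ := ℓ * (γ⁻¹ * Mg) ^ 2 with hC
  have hC0 : 0 ≤ C := by positivity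
  have key : ∀ t, L (θ (t + 1)) ≤ L (θ t) - ε * (η t * a t) + C * η t ^ 2 := by
    intro t
    have hdesc := descent L hL hℓ.le hLip (θ t) (θ (t + 1))
    have hdiff : θ (t + 1) - θ t = -(η t • u t) := by
      rw [hstep t]; abel
    rw [hdiff] at hdesc
    have hinner : (inner ℝ (g t) (-(η t • u t)) : ℝ) = -(η t * inner ℝ (g t) (u t)) := by
      rw [inner_neg_right, real_inner_smul_right]
    have hn : ‖-(η t • u t)‖ = η t * ‖u t‖ := by
      rw [norm_neg, norm_smul, Real.norm_eq_abs, abs_of_pos (hη t)]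
    rw [hinner, hn] at hdesc
    have hq1 := (hquad t).1
    have hq2 := (hquad t).2
    have hu2 : ‖u t‖ ≤ γ⁻¹ * Mg :=
      hq2.trans (mul_le_mul_of_nonneg_left (hgrad t) (inv_nonneg.mpr hγ.le))
    have h1 : -(η t * inner ℝ (g t) (u t)) ≤ -(ε * (η t * a t)) := by
      have := mul_le_mul_of_nonneg_left hq1 (hη t).le
      simp only [ha]
      nlinarith
    have h2 : ℓ * (η t * ‖u t‖) ^ 2 ≤ C * η t ^ 2 := by
      rw [hC]
      have h3 : (η t * ‖u t‖) ^ 2 ≤ η t ^ 2 * (γ⁻¹ * Mg) ^ 2 := by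
        rw [mul_pow]
        refine mul_le_mul_of_nonneg_left ?_ (sq_nonneg _)
        exact pow_le_pow_left₀ (norm_nonneg _) hu2 2
      nlinarith
    linarith
  -- telescoping bound
  obtain ⟨m, hm⟩ := hbdd
  have hmle : ∀ x, m ≤ L x := fun x => hm (Set.mem_range_self x)
  have hsum2 : ∀ T, ∑ t ∈ Finset.range T, η t ^ 2 ≤ ∑' t, η t ^ 2 := fun T =>
    Summable.sum_le_tsum _ (fun t _ => sq_nonneg _) hsq
  have htel : ∀ T, ε * ∑ t ∈ Finset.range T, (η t * a t)
      ≤ L (θ 0) - L (θ T) + C * ∑ t ∈ Finset.range T, η t ^ 2 := by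
    intro T
    induction T with
    | zero => simp
    | succ T ih =>
      rw [Finset.sum_range_succ, Finset.sum_range_succ, mul_add, mul_add]
      have := key T
      linarith
  set K : ℝ := (L (θ 0) - m + C * ∑' t, η t ^ 2) / ε with hK
  have hbound : ∀ T, ∑ t ∈ Finset.range T, (η t * a t) ≤ K := by
    intro T
    rw [hK, le_div_iff₀ hε, mul_comm]
    have h1 := htel T
    have h2 := hmle (θ T)
    have h3 := hsum2 T
    nlinarith
  have hS : Summable fun t => η t * a t :=
    summable_of_sum_range_le (fun t => mul_nonneg (hη t).le (sq_nonneg _)) hbound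
  exact liminf_eq_zero_of_summable_mul η a (Mg ^ 2) hη (fun t => sq_nonneg _)
    (fun t => pow_le_pow_left₀ (norm_nonneg _) (hgrad t) 2) hdiv hS
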